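/- The scanline mapping π ↦ w(π), where w(π) is the word whose i-th letter is the index of the run of π containing the value i, is injective on permutations. -/

import Mathlib

/-- Split a list into maximal strictly decreasing contiguous blocks ("falls"). -/
def fallSplit : List ℕ → List (List ℕ)
  | [] => []
  | a :: rest =>
    match fallSplit rest with
    | (b :: bs) :: gs => if b < a then (a :: b :: bs) :: gs else [a] :: (b :: bs) :: gs
    | gs => [a] :: gs

/-- Split a list into maximal strictly increasing contiguous blocks ("runs"). -/
def runSplit : List ℕ → List (List ℕ)
  | [] => []
  | a :: rest =>
    match runSplit rest with
    | (b :: bs) :: gs => if a < b then (a :: b :: bs) :: gs else [a] :: (b :: bs) :: gs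
    | gs => [a] :: gs

/-- The flip transformation `T`: reverse every fall. -/
def flipT (l : List ℕ) : List ℕ := ((fallSplit l).map List.reverse).flatten

/-- `l` is the one-line notation of a permutation of `{1, …, n}`. -/
def IsPermList (n : ℕ) (l : List ℕ) : Prop := l.Perm (List.range' 1 n)

/-- Every pair of adjacent runs overlaps: `min R₁ < max R₂` (pop-stacked condition). -/
def Overlapping (l : List ℕ) : Prop :=
  ∀ R₁ R₂ : List ℕ, [R₁, R₂] <:+: runSplit l → ∃ a ∈ R₁, ∃ b ∈ R₂, a < b

/-- The scanline word of a permutation: for each value v = 1, …, n in increasing order,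
record the (1-based) index of the run of the permutation containing v. -/
def scanline (l : List ℕ) : List ℕ :=
  (List.range' 1 l.length).map (fun v => (runSplit l).findIdx (fun R => R.contains v) + 1)

lemma runSplit_flatten (l : List ℕ) : (runSplit l).flatten = l := by
  induction l with
  | nil => rfl
  | cons a rest ih =>
    rw [runSplit]
    rcases hr : runSplit rest with _ | ⟨_ | ⟨b, bs⟩, gs⟩ <;> rw [hr] at ih <;>
      simp_all <;> split <;> simp_all

lemma runSplit_chain (l : List ℕ) : ∀ R ∈ runSplit l, R.Chain' (· < ·) := by
  induction l with
  | nil => simp [runSplit]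
  | cons a rest ih =>
    rw [runSplit]
    rcases hr : runSplit rest with _ | ⟨_ | ⟨b, bs⟩, gs⟩ <;> rw [hr] at ih <;> simp_all [List.Chain', List.isChain_singleton]
    split <;> simp_all [List.isChain_cons_cons]

lemma runSplit_ne_nil (l : List ℕ) : ∀ R ∈ runSplit l, R ≠ [] := by
  induction l with
  | nil => simp [runSplit]
  | cons a rest ih =>
    rw [runSplit]
    rcases hr : runSplit rest with _ | ⟨_ | ⟨b, bs⟩, gs⟩ <;> rw [hr] at ih <;> simp_all
    split <;> simp_all

lemma mem_run_iff {n : ℕ} {l : List ℕ} (hp : IsPermList n l) {j : ℕ}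
    (hj : j < (runSplit l).length) (v : ℕ) :
    v ∈ (runSplit l)[j] ↔ v ∈ List.range' 1 n ∧
      (runSplit l).findIdx (fun R => R.contains v) = j := by
  have hnd : l.Nodup := hp.nodup_iff.mpr (List.nodup_range' (s := 1) (n := n))
  have hfl : (runSplit l).flatten = l := runSplit_flatten l
  have hdisj : List.Pairwise List.Disjoint (runSplit l) :=
    ((List.nodup_flatten).mp (by rw [hfl]; exact hnd)).2
  constructor
  · intro hv
    have hvl : v ∈ l := hfl ▸ List.mem_flatten.mpr ⟨_, List.getElem_mem hj, hv⟩
    refine ⟨hp.mem_iff.mp hvl, ?_⟩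
    rw [List.findIdx_eq hj]
    refine ⟨by simpa using hv, fun i hi => ?_⟩
    have := (List.pairwise_iff_getElem.mp hdisj) i j (hi.trans hj) hj hi
    have hc : v ∉ (runSplit l)[i] := fun hmem => this hmem hv
    simpa using hc
  · rintro ⟨hvr, hfi⟩
    have hvl : v ∈ l := hp.mem_iff.mpr hvr
    have : ∃ R ∈ runSplit l, R.contains v = true := by
      rw [← hfl] at hvl
      obtain ⟨R, hR, hvR⟩ := List.mem_flatten.mp hvl
      exact ⟨R, hR, by simpa using hvR⟩
    have hlt := List.findIdx_lt_length_of_exists this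
    subst hfi
    simpa using List.findIdx_getElem (w := hlt)

lemma run_eq_filter {n : ℕ} {l : List ℕ} (hp : IsPermList n l) {j : ℕ}
    (hj : j < (runSplit l).length) :
    (runSplit l)[j] = (List.range' 1 n).filter
      (fun v => (runSplit l).findIdx (fun R => R.contains v) == j) := by
  haveI : IsAntisymm ℕ (· < ·) := ⟨fun a b h h' => absurd h' (lt_asymm h)⟩
  have hsrun : List.Pairwise (· < ·) (runSplit l)[j] :=
    List.isChain_iff_pairwise.mp (runSplit_chain l _ (List.getElem_mem hj))
  have hsf : List.Pairwise (· < ·) ((List.range' 1 n).filter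
      (fun v => (runSplit l).findIdx (fun R => R.contains v) == j)) :=
    (List.pairwise_lt_range' (s := 1) (n := n)).filter _
  refine List.Perm.eq_of_pairwise' hsrun hsf ?_
  rw [List.perm_ext_iff_of_nodup hsrun.nodup ((List.nodup_range' (s := 1) (n := n)).filter _)]
  intro a
  rw [mem_run_iff hp hj, List.mem_filter]
  simp

/-- The scanline mapping is injective on permutations. -/
theorem scanline_injective (n : ℕ) (l₁ l₂ : List ℕ)
    (h₁ : IsPermList n l₁) (h₂ : IsPermList n l₂)
    (h : scanline l₁ = scanline l₂) : l₁ = l₂ := by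
  have hlen₁ : l₁.length = n := by simpa using h₁.length_eq
  have hlen₂ : l₂.length = n := by simpa using h₂.length_eq
  unfold scanline at h
  rw [hlen₁, hlen₂] at h
  have hf : ∀ v ∈ List.range' 1 n,
      (runSplit l₁).findIdx (fun R => R.contains v) =
      (runSplit l₂).findIdx (fun R => R.contains v) := by
    intro v hv
    have := (List.map_eq_map_iff.mp h) v hv
    omega
  -- findIdx < length for values in l
  have hflt : ∀ (l : List ℕ), IsPermList n l → ∀ v ∈ List.range' 1 n,
      (runSplit l).findIdx (fun R => R.contains v) < (runSplit l).length := by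
    intro l hp v hv
    apply List.findIdx_lt_length_of_exists
    have hvl : v ∈ l := hp.mem_iff.mpr hv
    rw [← runSplit_flatten l] at hvl
    obtain ⟨R, hR, hvR⟩ := List.mem_flatten.mp hvl
    exact ⟨R, hR, by simpa using hvR⟩
  have hlen : (runSplit l₁).length = (runSplit l₂).length := by
    by_contra hne
    rcases Nat.lt_or_ge (runSplit l₁).length (runSplit l₂).length with hlt | hge
    · set j := (runSplit l₁).length with hjd
      have hj₂ : j < (runSplit l₂).length := hlt
      obtain ⟨v, hv⟩ := List.exists_mem_of_ne_nil _ (runSplit_ne_nil l₂ _ (List.getElem_mem hj₂))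
      obtain ⟨hvr, hfi⟩ := (mem_run_iff h₂ hj₂ v).mp hv
      have := hflt l₁ h₁ v hvr
      rw [hf v hvr, hfi] at this
      omega
    · have hlt : (runSplit l₂).length < (runSplit l₁).length := lt_of_le_of_ne hge (Ne.symm hne)
      set j := (runSplit l₂).length with hjd
      have hj₁ : j < (runSplit l₁).length := hlt
      obtain ⟨v, hv⟩ := List.exists_mem_of_ne_nil _ (runSplit_ne_nil l₁ _ (List.getElem_mem hj₁))
      obtain ⟨hvr, hfi⟩ := (mem_run_iff h₁ hj₁ v).mp hv
      have := hflt l₂ h₂ v hvr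
      rw [← hf v hvr, hfi] at this
      omega
  have hrs : runSplit l₁ = runSplit l₂ := by
    apply List.ext_getElem hlen
    intro j hj₁ hj₂
    rw [run_eq_filter h₁ hj₁, run_eq_filter h₂ hj₂]
    apply List.filter_congr
    intro v hv
    rw [hf v hv]
  rw [← runSplit_flatten l₁, ← runSplit_flatten l₂, hrs]
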